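/- arXiv:1804.05454 — 6 statements merged into one kernel-verified Lean document; each statement's English description precedes it below -/
import Mathlib

section
/- For a real-valued random variable Y with E[Y]=0, E[Y^2]=σ², and Y ≤ s almost surely (s > 0), and for any λ ≥ 0, the moment generating function satisfies E[e^{λY}] ≤ (σ²/s²)(e^{λs} − 1 − λs) + 1. -/
open MeasureTheory Real

-- e^u ≤ 1 + u + u²/2 for u ≤ 0
lemma aux_exp_le_quad {u : ℝ} (hu : u ≤ 0) : Real.exp u ≤ 1 + u + u ^ 2 / 2 := by
  have h : AntitoneOn (fun u : ℝ => 1 + u + u ^ 2 / 2 - Real.exp u) (Set.Iic 0) := by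
    apply antitoneOn_of_deriv_nonpos (convex_Iic 0)
    · fun_prop
    · fun_prop
    · intro x hx
      have hd : HasDerivAt (fun u : ℝ => 1 + u + u ^ 2 / 2 - Real.exp u)
          (1 + x - Real.exp x) x := by
        have := ((hasDerivAt_id x).const_add 1).add
          (((hasDerivAt_pow 2 x).div_const 2)) |>.sub (Real.hasDerivAt_exp x)
        refine this.congr_deriv ?_; norm_num
      rw [hd.deriv]
      have := Real.add_one_le_exp x
      linarith
  have := h (Set.mem_Iic.2 hu) (Set.mem_Iic.2 le_rfl) hu
  simp at this
  linarith

-- 1 + t + t²/2 ≤ e^t for t ≥ 0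
lemma aux_quad_le_exp {t : ℝ} (ht : 0 ≤ t) : 1 + t + t ^ 2 / 2 ≤ Real.exp t := by
  have h : MonotoneOn (fun t : ℝ => Real.exp t - (1 + t + t ^ 2 / 2)) (Set.Ici 0) := by
    apply monotoneOn_of_deriv_nonneg (convex_Ici 0)
    · fun_prop
    · fun_prop
    · intro x hx
      have hd : HasDerivAt (fun t : ℝ => Real.exp t - (1 + t + t ^ 2 / 2))
          (Real.exp x - (1 + x)) x := by
        have := (Real.hasDerivAt_exp x).sub
          (((hasDerivAt_id x).const_add 1).add ((hasDerivAt_pow 2 x).div_const 2))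
        refine this.congr_deriv ?_; norm_num
      rw [hd.deriv]
      have := Real.add_one_le_exp x
      linarith
  have := h (Set.mem_Ici.2 le_rfl) (Set.mem_Ici.2 ht) ht
  simp at this
  linarith

-- (u-2)e^u + u + 2 ≥ 0 for u ≥ 0
lemma aux_h_nonneg {u : ℝ} (hu : 0 ≤ u) : 0 ≤ (u - 2) * Real.exp u + u + 2 := by
  have h : MonotoneOn (fun u : ℝ => (u - 2) * Real.exp u + u + 2) (Set.Ici 0) := by
    apply monotoneOn_of_deriv_nonneg (convex_Ici 0)
    · fun_prop
    · fun_prop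
    · intro x hx
      have hd : HasDerivAt (fun u : ℝ => (u - 2) * Real.exp u + u + 2)
          ((x - 1) * Real.exp x + 1) x := by
        have := ((((hasDerivAt_id x).sub_const 2).mul (Real.hasDerivAt_exp x)).add
          (hasDerivAt_id x)).add_const 2
        refine this.congr_deriv ?_; simp only [id]; ring
      rw [hd.deriv]
      -- (x-1)e^x + 1 ≥ 0 since (1-x) ≤ e^{-x}
      have h1 := Real.add_one_le_exp (-x)
      have h2 := Real.exp_pos x
      have h3 : Real.exp (-x) * Real.exp x = 1 := by
        rw [← Real.exp_add]; simp
      nlinarith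
  have := h (Set.mem_Ici.2 le_rfl) (Set.mem_Ici.2 hu) hu
  simp at this
  linarith

-- g monotone on (0,∞)
lemma aux_g_mono : MonotoneOn (fun u : ℝ => (Real.exp u - 1 - u) / u ^ 2) (Set.Ioi 0) := by
  apply monotoneOn_of_deriv_nonneg (convex_Ioi 0)
  · apply ContinuousOn.div (by fun_prop) (by fun_prop)
    intro x hx
    have : (0:ℝ) < x := hx
    positivity
  · rw [interior_Ioi]
    apply DifferentiableOn.div (by fun_prop) (by fun_prop)
    intro x hx
    have : (0:ℝ) < x := hx
    positivity
  · rw [interior_Ioi]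
    intro x hx
    have hx0 : (0:ℝ) < x := hx
    have hd : HasDerivAt (fun u : ℝ => (Real.exp u - 1 - u) / u ^ 2)
        (((Real.exp x - 1) * x ^ 2 - (Real.exp x - 1 - x) * (2 * x)) / (x ^ 2) ^ 2) x := by
      have hnum : HasDerivAt (fun u : ℝ => Real.exp u - 1 - u) (Real.exp x - 1) x := by
        have := ((Real.hasDerivAt_exp x).sub_const 1).sub (hasDerivAt_id x)
        exact this
      have hden : HasDerivAt (fun u : ℝ => u ^ 2) (2 * x) x := by
        have := hasDerivAt_pow 2 x
        refine this.congr_deriv ?_; norm_num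
      exact hnum.div hden (by positivity)
    rw [hd.deriv]
    have hh := aux_h_nonneg hx0.le
    have hnum : 0 ≤ (Real.exp x - 1) * x ^ 2 - (Real.exp x - 1 - x) * (2 * x) := by
      nlinarith
    positivity

-- key: for t > 0, u ≤ t : e^u ≤ 1 + u + (e^t - 1 - t)/t² · u²
lemma aux_key {u t : ℝ} (ht : 0 < t) (hut : u ≤ t) :
    Real.exp u ≤ 1 + u + (Real.exp t - 1 - t) / t ^ 2 * u ^ 2 := by
  have h2 := aux_quad_le_exp ht.le
  rcases le_or_gt u 0 with hu | hu
  · have h1 := aux_exp_le_quad hu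
    have key : u ^ 2 / 2 ≤ (Real.exp t - 1 - t) / t ^ 2 * u ^ 2 := by
      rw [div_mul_eq_mul_div, le_div_iff₀ (by positivity)]
      nlinarith [sq_nonneg u]
    linarith
  · have hg := aux_g_mono (Set.mem_Ioi.2 hu) (Set.mem_Ioi.2 ht) hut
    simp only at hg
    have : Real.exp u - 1 - u ≤ (Real.exp t - 1 - t) / t ^ 2 * u ^ 2 := by
      rw [div_le_div_iff₀ (by positivity) (by positivity)] at hg
      rw [div_mul_eq_mul_div, le_div_iff₀ (by positivity)]
      nlinarith
    linarith

-- pointwise bound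
lemma aux_pointwise {s lam y : ℝ} (hs : 0 < s) (hlam : 0 ≤ lam) (hy : y ≤ s) :
    Real.exp (lam * y) ≤
      1 + lam * y + (Real.exp (lam * s) - 1 - lam * s) / s ^ 2 * y ^ 2 := by
  rcases hlam.eq_or_lt with h0 | hpos
  · simp [← h0]
  · have ht : 0 < lam * s := mul_pos hpos hs
    have hut : lam * y ≤ lam * s := mul_le_mul_of_nonneg_left hy hpos.le
    have := aux_key ht hut
    have heq : (Real.exp (lam * s) - 1 - lam * s) / (lam * s) ^ 2 * (lam * y) ^ 2
        = (Real.exp (lam * s) - 1 - lam * s) / s ^ 2 * y ^ 2 := by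
      field_simp
    linarith [this, heq ▸ this]

theorem mgf_refined_bound {Ω : Type*} [MeasurableSpace Ω] (μ : Measure Ω)
    [IsProbabilityMeasure μ] (Y : Ω → ℝ) (σ s lam : ℝ)
    (hs : 0 < s) (hlam : 0 ≤ lam)
    (hmeas : Measurable Y)
    (hint : Integrable Y μ) (hmean : ∫ ω, Y ω ∂μ = 0)
    (hint2 : Integrable (fun ω => (Y ω) ^ 2) μ)
    (hvar : ∫ ω, (Y ω) ^ 2 ∂μ = σ ^ 2)
    (hbdd : ∀ᵐ ω ∂μ, Y ω ≤ s)
    (hintexp : Integrable (fun ω => Real.exp (lam * Y ω)) μ) :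
    ∫ ω, Real.exp (lam * Y ω) ∂μ ≤
      σ ^ 2 / s ^ 2 * (Real.exp (lam * s) - 1 - lam * s) + 1 := by
  set c := (Real.exp (lam * s) - 1 - lam * s) / s ^ 2 with hc
  have hae : ∀ᵐ ω ∂μ, Real.exp (lam * Y ω) ≤ 1 + lam * Y ω + c * (Y ω) ^ 2 :=
    hbdd.mono fun ω h => aux_pointwise hs hlam h
  have hintR : Integrable (fun ω => 1 + lam * Y ω + c * (Y ω) ^ 2) μ :=
    ((integrable_const 1).add (hint.const_mul lam)).add (hint2.const_mul c)
  have hle := integral_mono_ae hintexp hintR hae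
  have hval : ∫ ω, (1 + lam * Y ω + c * (Y ω) ^ 2) ∂μ = c * σ ^ 2 + 1 := by
    have hA : Integrable (fun ω => 1 + lam * Y ω) μ :=
      (integrable_const 1).add (hint.const_mul lam)
    have hB : Integrable (fun ω : Ω => (1:ℝ)) μ := integrable_const 1
    rw [integral_add hA (hint2.const_mul c), integral_add hB (hint.const_mul lam),
      integral_const_mul, integral_const_mul, hmean, hvar]
    simp
    ring
  rw [hval] at hle
  have : c * σ ^ 2 + 1 = σ ^ 2 / s ^ 2 * (Real.exp (lam * s) - 1 - lam * s) + 1 := by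
    rw [hc]; ring
  linarith
end

section
/- For q > 0, r > 0, and t ∈ (0, r), the function b(λ) = ln(q(e^{λr} − λr − 1) + 1) − λt, defined for λ ∈ ℝ, attains its minimum over ℝ at λ* = 1/t + 1/(qr) − 1/r − (1/r)·W(exp(r/t + 1/q − 1 + ln((r−t)/t))), where W is the principal branch of the Lambert W function. -/
open Real

theorem minimizer_via_lambertW (W : ℝ → ℝ)
    (hW : ∀ x : ℝ, -(Real.exp 1)⁻¹ ≤ x → W x * Real.exp (W x) = x ∧ -1 ≤ W x)
    (q r t : ℝ) (hq : 0 < q) (hr : 0 < r) (ht : 0 < t) (htr : t < r) :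
    ∀ lam : ℝ,
      Real.log (q * (Real.exp ((1 / t + 1 / (q * r) - 1 / r -
          (1 / r) * W (Real.exp (r / t + 1 / q - 1 + Real.log ((r - t) / t)))) * r) -
          (1 / t + 1 / (q * r) - 1 / r -
          (1 / r) * W (Real.exp (r / t + 1 / q - 1 + Real.log ((r - t) / t)))) * r - 1) + 1) -
        (1 / t + 1 / (q * r) - 1 / r -
          (1 / r) * W (Real.exp (r / t + 1 / q - 1 + Real.log ((r - t) / t)))) * t ≤
      Real.log (q * (Real.exp (lam * r) - lam * r - 1) + 1) - lam * t := by
  intro lam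
  set E : ℝ := Real.exp (r / t + 1 / q - 1 + Real.log ((r - t) / t)) with hE
  set w : ℝ := W E with hwdef
  set L : ℝ := 1 / t + 1 / (q * r) - 1 / r - 1 / r * w with hLdef
  set b : ℝ → ℝ := fun l => Real.log (q * (Real.exp (l * r) - l * r - 1) + 1) - l * t with hbdef
  show b L ≤ b lam
  have hE0 : 0 < E := Real.exp_pos _
  have hWeq : w * Real.exp w = E :=
    (hW E ((neg_nonpos.mpr (inv_nonneg.mpr (Real.exp_pos 1).le)).trans hE0.le)).1
  have hrt : (0:ℝ) < r - t := by linarith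
  have hc : (0:ℝ) < (r - t) / t := div_pos hrt ht
  have h1 : Real.exp (Real.log ((r - t) / t)) = (r - t) / t := Real.exp_log hc
  have hLr : L * r = r / t + 1 / q - 1 - w := by
    rw [hLdef]; field_simp
  have hA : L * r + w = r / t + 1 / q - 1 := by rw [hLr]; ring
  have h2 : Real.exp (L * r) * Real.exp w * (r - t) = E * t := by
    have hEeq : E = Real.exp (L * r + w) * ((r - t) / t) := by
      rw [hA, hE, Real.exp_add, h1]
    rw [hEeq, Real.exp_add]
    field_simp
  have key : (r - t) * Real.exp (L * r) = t * w :=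
    mul_right_cancel₀ (Real.exp_pos w).ne' (by linear_combination h2 - t * hWeq)
  have hti : t * (1 / t) = 1 := by field_simp
  have hqi : q * (1 / q) = 1 := by field_simp
  have hphiL : q * (r - t) * Real.exp (L * r) + q * t * (L * r) - (q * r - q * t + t) = 0 := by
    linear_combination q * key + q * t * hLr + q * r * hti + t * hqi
  have hgpos : ∀ l : ℝ, 0 < q * (Real.exp (l * r) - l * r - 1) + 1 := by
    intro l
    have h := Real.add_one_le_exp (l * r)
    nlinarith [mul_nonneg hq.le (by linarith : (0:ℝ) ≤ Real.exp (l * r) - l * r - 1)]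
  have hb : ∀ l : ℝ, HasDerivAt b
      (q * (Real.exp (l * r) * r - r) / (q * (Real.exp (l * r) - l * r - 1) + 1) - t) l := by
    intro l
    have h1 : HasDerivAt (fun l : ℝ => l * r) r l := by
      simpa using (hasDerivAt_id l).mul_const r
    have h2 : HasDerivAt (fun l : ℝ => Real.exp (l * r)) (Real.exp (l * r) * r) l := h1.exp
    have h3 : HasDerivAt (fun l : ℝ => q * (Real.exp (l * r) - l * r - 1) + 1)
        (q * (Real.exp (l * r) * r - r)) l :=
      (((h2.sub h1).sub_const 1).const_mul q).add_const 1
    have h4 : HasDerivAt (fun l : ℝ => Real.log (q * (Real.exp (l * r) - l * r - 1) + 1))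
        (q * (Real.exp (l * r) * r - r) / (q * (Real.exp (l * r) - l * r - 1) + 1)) l :=
      h3.log (hgpos l).ne'
    have h5 : HasDerivAt (fun l : ℝ => l * t) t l := by
      simpa using (hasDerivAt_id l).mul_const t
    exact h4.sub h5
  have hdiff : Differentiable ℝ b := fun l => (hb l).differentiableAt
  have hmono : MonotoneOn b (Set.Ici L) := by
    apply monotoneOn_of_deriv_nonneg (convex_Ici L) hdiff.continuous.continuousOn
      (fun x _ => (hdiff x).differentiableWithinAt)
    intro x hx
    rw [interior_Ici] at hx
    rw [(hb x).deriv]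
    rw [sub_nonneg, le_div_iff₀ (hgpos x)]
    have hexp : Real.exp (L * r) ≤ Real.exp (x * r) :=
      Real.exp_le_exp.2 (mul_le_mul_of_nonneg_right (Set.mem_Ioi.1 hx).le hr.le)
    nlinarith [hphiL, mul_nonneg (mul_nonneg hq.le hrt.le) (by linarith : (0:ℝ) ≤ Real.exp (x * r) - Real.exp (L * r)),
      mul_nonneg (mul_nonneg (mul_nonneg hq.le ht.le) hr.le) (sub_nonneg.2 (Set.mem_Ioi.1 hx).le)]
  have hanti : AntitoneOn b (Set.Iic L) := by
    apply antitoneOn_of_deriv_nonpos (convex_Iic L) hdiff.continuous.continuousOn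
      (fun x _ => (hdiff x).differentiableWithinAt)
    intro x hx
    rw [interior_Iic] at hx
    rw [(hb x).deriv]
    rw [sub_nonpos, div_le_iff₀ (hgpos x)]
    have hexp : Real.exp (x * r) ≤ Real.exp (L * r) :=
      Real.exp_le_exp.2 (mul_le_mul_of_nonneg_right (Set.mem_Iio.1 hx).le hr.le)
    nlinarith [hphiL, mul_nonneg (mul_nonneg hq.le hrt.le) (by linarith : (0:ℝ) ≤ Real.exp (L * r) - Real.exp (x * r)),
      mul_nonneg (mul_nonneg (mul_nonneg hq.le ht.le) hr.le) (sub_nonneg.2 (Set.mem_Iio.1 hx).le)]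
  rcases le_total lam L with h | h
  · exact hanti (Set.mem_Iic.2 h) (Set.mem_Iic.2 le_rfl) h
  · exact hmono (Set.mem_Ici.2 le_rfl) (Set.mem_Ici.2 h) h
end

section
/- For q > 0, r > 0, and t ∈ (0, r), the quantity λ* = 1/t + 1/(qr) − 1/r − (1/r)·W(exp(r/t + 1/q − 1 + ln((r−t)/t))) is nonnegative, where W is the principal Lambert W function. -/
open Real

theorem minimizer_nonneg (W : ℝ → ℝ)
    (hW : ∀ x : ℝ, -(Real.exp 1)⁻¹ ≤ x → W x * Real.exp (W x) = x ∧ -1 ≤ W x)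
    (q r t : ℝ) (hq : 0 < q) (hr : 0 < r) (ht : 0 < t) (htr : t < r) :
    0 ≤ 1 / t + 1 / (q * r) - 1 / r -
      (1 / r) * W (Real.exp (r / t + 1 / q - 1 + Real.log ((r - t) / t))) := by
  set a : ℝ := r / t + 1 / q - 1 with ha
  set x : ℝ := Real.exp (a + Real.log ((r - t) / t)) with hx
  have hc : (0:ℝ) < (r - t) / t := div_pos (by linarith) ht
  have hxval : x = Real.exp a * ((r - t) / t) := by
    rw [hx, Real.exp_add, Real.exp_log hc]
  have hxpos : 0 < x := Real.exp_pos _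
  have hneg : -(Real.exp 1)⁻¹ ≤ x := (neg_nonpos.mpr (inv_nonneg.mpr (Real.exp_pos 1).le)).trans hxpos.le
  obtain ⟨hWx, _⟩ := hW x hneg
  have ha_pos : 0 < a := by
    have h1 : 1 < r / t := (one_lt_div ht).mpr htr
    have h2 : 0 < 1 / q := by positivity
    simp only [ha]; linarith
  have hca : (r - t) / t ≤ a := by
    have : (r - t) / t = r / t - 1 := by field_simp
    rw [this, ha]
    have : 0 < 1 / q := by positivity
    linarith
  have hxle : x ≤ a * Real.exp a := by
    rw [hxval, mul_comm]
    exact mul_le_mul_of_nonneg_right hca (Real.exp_pos a).le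
  have hWle : W x ≤ a := by
    by_contra h
    push_neg at h
    have h1 : a * Real.exp a < W x * Real.exp (W x) :=
      mul_lt_mul h (Real.exp_le_exp.mpr h.le) (Real.exp_pos a)
        (le_trans ha_pos.le h.le)
    rw [hWx] at h1
    linarith
  have hgoal : (1:ℝ) / t + 1 / (q * r) - 1 / r = a / r + (1/r) * W x - (1/r) * W x + (a - a)/r := by
    have hq' : q ≠ 0 := hq.ne'
    have hr' : r ≠ 0 := hr.ne'
    have ht' : t ≠ 0 := ht.ne'
    field_simp [ha]
    rw [ha]; field_simp; ring
  have : (1:ℝ)/t + 1/(q*r) - 1/r = a / r := by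
    rw [hgoal]; ring
  rw [this]
  have : (1/r) * W x ≤ (1/r) * a := by
    apply mul_le_mul_of_nonneg_left hWle (by positivity)
  calc (0:ℝ) ≤ a/r - (1/r) * a := by rw [one_div, inv_mul_eq_div]; linarith
    _ ≤ a/r - (1/r) * W x := by linarith
end

section
/- For σ > 0 and s > 0, the function φ(λ) = σ²e^{λs}/((σ²/s²)(e^{λs} − λs − 1) + 1) attains its maximum over λ ∈ ℝ at λ = s/σ², with maximum value s²/(1 − e^{−s²/σ²}). -/
open Real

theorem curvature_sup (σ s : ℝ) (hσ : 0 < σ) (hs : 0 < s) :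
    (∀ lam : ℝ,
      σ ^ 2 * Real.exp (lam * s) /
          (σ ^ 2 / s ^ 2 * (Real.exp (lam * s) - lam * s - 1) + 1) ≤
        σ ^ 2 * Real.exp ((s / σ ^ 2) * s) /
          (σ ^ 2 / s ^ 2 * (Real.exp ((s / σ ^ 2) * s) - (s / σ ^ 2) * s - 1) + 1)) ∧
    σ ^ 2 * Real.exp ((s / σ ^ 2) * s) /
        (σ ^ 2 / s ^ 2 * (Real.exp ((s / σ ^ 2) * s) - (s / σ ^ 2) * s - 1) + 1) =
      s ^ 2 / (1 - Real.exp (-(s ^ 2 / σ ^ 2))) := by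
  have hs2 : (0:ℝ) < s ^ 2 := by positivity
  have hσ2 : (0:ℝ) < σ ^ 2 := by positivity
  have hc : (0:ℝ) < σ ^ 2 / s ^ 2 := by positivity
  have ht : (s / σ ^ 2) * s = s ^ 2 / σ ^ 2 := by field_simp
  set t : ℝ := s ^ 2 / σ ^ 2 with htdef
  have htpos : 0 < t := by positivity
  have hct : (σ ^ 2 / s ^ 2) * t = 1 := by rw [htdef]; field_simp
  have hexpt : 0 < Real.exp t := Real.exp_pos t
  have hexpt1 : 1 < Real.exp t := by
    have := Real.add_one_le_exp t
    linarith
  have hDtop : σ ^ 2 / s ^ 2 * (Real.exp ((s / σ ^ 2) * s) - (s / σ ^ 2) * s - 1) + 1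
      = σ ^ 2 / s ^ 2 * (Real.exp t - 1) := by
    rw [ht]; nlinarith [hct]
  have hDtoppos : 0 < σ ^ 2 / s ^ 2 * (Real.exp t - 1) := by
    apply mul_pos hc; linarith
  constructor
  · intro lam
    set x : ℝ := lam * s with hxdef
    have hDx : 0 < σ ^ 2 / s ^ 2 * (Real.exp x - x - 1) + 1 := by
      have h1 := Real.add_one_le_exp x
      nlinarith [mul_nonneg hc.le (by linarith : (0:ℝ) ≤ Real.exp x - x - 1)]
    rw [hDtop, div_le_div_iff₀ hDx hDtoppos, ht]
    have key : Real.exp t * (x - t + 1) ≤ Real.exp x := by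
      have h := Real.add_one_le_exp (x - t)
      have hmul : Real.exp x = Real.exp (x - t) * Real.exp t := by
        rw [← Real.exp_add]; ring_nf
      nlinarith [mul_le_mul_of_nonneg_right h hexpt.le]
    have expand : σ ^ 2 * Real.exp t * (σ ^ 2 / s ^ 2 * (Real.exp x - x - 1) + 1) -
        σ ^ 2 * Real.exp x * (σ ^ 2 / s ^ 2 * (Real.exp t - 1)) =
        σ ^ 2 * (σ ^ 2 / s ^ 2) * (Real.exp x - Real.exp t * (x - t + 1)) := by
      linear_combination (-(σ ^ 2 * Real.exp t)) * hct
    nlinarith [mul_nonneg (mul_pos hσ2 hc).le (by linarith : (0:ℝ) ≤ Real.exp x - Real.exp t * (x - t + 1))]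
  · rw [hDtop, ht]
    have hne : Real.exp t - 1 ≠ 0 := by linarith
    have h2 : 1 - Real.exp (-t) ≠ 0 := by
      have : Real.exp (-t) < 1 := by
        rw [Real.exp_neg]
        rw [inv_lt_one_iff₀]; right; exact hexpt1
      linarith
    rw [Real.exp_neg] at h2 ⊢
    field_simp
end

section
/- For σ > 0, s > 0, t ∈ ℝ, the function b(λ) = ln((σ²/s²)(e^{λs} − λs − 1) + 1) − λt satisfies b''(λ) ≤ s²/(1 − e^{−s²/σ²}) for all λ ∈ ℝ. -/
open Real

theorem second_deriv_bound (σ s t : ℝ) (hσ : 0 < σ) (hs : 0 < s) :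
    ∀ lam : ℝ,
      deriv (deriv (fun l : ℝ =>
          Real.log (σ ^ 2 / s ^ 2 * (Real.exp (l * s) - l * s - 1) + 1) - l * t)) lam ≤
        s ^ 2 / (1 - Real.exp (-(s ^ 2 / σ ^ 2))) := by
  intro lam
  set c := σ ^ 2 / s ^ 2 with hc_def
  have hc : 0 < c := div_pos (pow_pos hσ 2) (pow_pos hs 2)
  set g : ℝ → ℝ := fun l => c * (Real.exp (l * s) - l * s - 1) + 1 with hg_def
  have hgpos : ∀ l, (0:ℝ) < g l := by
    intro l
    have h1 : 0 ≤ Real.exp (l * s) - l * s - 1 := by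
      nlinarith [Real.add_one_le_exp (l * s)]
    have : 0 ≤ c * (Real.exp (l * s) - l * s - 1) := mul_nonneg hc.le h1
    simp only [hg_def]
    linarith
  have hgd : ∀ l, HasDerivAt g (c * s * (Real.exp (l * s) - 1)) l := by
    intro l
    have h1 : HasDerivAt (fun l : ℝ => l * s) s l := hasDerivAt_mul_const s
    have h2 : HasDerivAt (fun l : ℝ => Real.exp (l * s)) (Real.exp (l * s) * s) l := h1.exp
    have h3 : HasDerivAt (fun l => c * (Real.exp (l * s) - l * s - 1) + 1)
        (c * (Real.exp (l * s) * s - s)) l :=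
      (((h2.sub h1).sub_const 1).const_mul c).add_const 1
    convert h3 using 1
    ring
  have hderiv1 : deriv (fun l : ℝ =>
      Real.log (c * (Real.exp (l * s) - l * s - 1) + 1) - l * t)
      = fun l => c * s * (Real.exp (l * s) - 1) / g l - t := by
    funext l
    have hFd : HasDerivAt (fun l : ℝ =>
        Real.log (c * (Real.exp (l * s) - l * s - 1) + 1) - l * t)
        (c * s * (Real.exp (l * s) - 1) / g l - t) l :=
      ((hgd l).log (hgpos l).ne').sub (hasDerivAt_mul_const t)
    exact hFd.deriv
  rw [hderiv1]
  have hNd : HasDerivAt (fun l : ℝ => c * s * (Real.exp (l * s) - 1))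
      (c * s * (Real.exp (lam * s) * s)) lam := by
    have h1 : HasDerivAt (fun l : ℝ => l * s) s lam := hasDerivAt_mul_const s
    exact ((h1.exp).sub_const 1).const_mul (c * s)
  have h2d : HasDerivAt (fun l => c * s * (Real.exp (l * s) - 1) / g l - t)
      ((c * s * (Real.exp (lam * s) * s) * g lam
        - c * s * (Real.exp (lam * s) - 1) * (c * s * (Real.exp (lam * s) - 1))) / (g lam) ^ 2)
      lam :=
    ((hNd.div (hgd lam) (hgpos lam).ne')).sub_const t
  rw [h2d.deriv]
  -- now the inequality
  set u := Real.exp (lam * s) with hu_def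
  have hupos : 0 < u := Real.exp_pos _
  set E := Real.exp (-(s ^ 2 / σ ^ 2)) with hE_def
  have hE1 : E < 1 := by
    apply Real.exp_lt_one_iff.mpr
    have : 0 < s ^ 2 / σ ^ 2 := div_pos (pow_pos hs 2) (pow_pos hσ 2)
    linarith
  have hE0 : 0 < E := Real.exp_pos _
  have hEpos : 0 < 1 - E := by linarith
  have hcs : c * (s ^ 2 / σ ^ 2) = 1 := by
    rw [hc_def, div_mul_div_comm, mul_comm (σ ^ 2), div_self]
    positivity
  have hkey : lam * s - s ^ 2 / σ ^ 2 + 1 ≤ u * E := by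
    have := Real.add_one_le_exp (lam * s - s ^ 2 / σ ^ 2)
    have heq : u * E = Real.exp (lam * s - s ^ 2 / σ ^ 2) := by
      rw [hu_def, hE_def, ← Real.exp_add]
      ring_nf
    linarith [heq ▸ this]
  have hkey2 : c * u * (1 - E) ≤ g lam := by
    have h1 : c * (lam * s - s ^ 2 / σ ^ 2 + 1) ≤ c * (u * E) :=
      mul_le_mul_of_nonneg_left hkey hc.le
    simp only [hg_def]
    nlinarith
  have hglam := hgpos lam
  rw [div_le_div_iff₀ (pow_pos hglam 2) hEpos]
  nlinarith [sq_nonneg (c * s * (u - 1)), mul_pos hupos hglam, pow_pos hs 2,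
    mul_le_mul_of_nonneg_left hkey2 (mul_pos (pow_pos hs 2) hglam).le,
    sq_nonneg s, mul_pos hc hupos]
end

section
/- For s > 0, σ > 0, and t ∈ (0, s), the minimizer λ* = 1/t + s/σ² − 1/s − (1/s)W(exp(s/t + s²/σ² − 1 + ln((s−t)/t))) of b(λ) = ln((σ²/s²)(e^{λs} − λs − 1) + 1) − λt satisfies b'(λ*) = 0, i.e., (σ²/s)(e^{λ*s} − 1) = t·((σ²/s²)(e^{λ*s} − λ*s − 1) + 1). -/
open Real

theorem minimizer_critical_point (W : ℝ → ℝ)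
    (hW : ∀ z : ℝ, -(Real.exp 1)⁻¹ ≤ z → W z * Real.exp (W z) = z ∧ -1 ≤ W z)
    (s σ t : ℝ) (hs : 0 < s) (hσ : 0 < σ) (ht : 0 < t) (hts : t < s) :
    σ ^ 2 / s * (Real.exp ((1 / t + s / σ ^ 2 - 1 / s -
        (1 / s) * W (Real.exp (s / t + s ^ 2 / σ ^ 2 - 1 + Real.log ((s - t) / t)))) * s)
        - 1) =
      t * (σ ^ 2 / s ^ 2 *
        (Real.exp ((1 / t + s / σ ^ 2 - 1 / s -
          (1 / s) * W (Real.exp (s / t + s ^ 2 / σ ^ 2 - 1 + Real.log ((s - t) / t)))) * s)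
          - (1 / t + s / σ ^ 2 - 1 / s -
          (1 / s) * W (Real.exp (s / t + s ^ 2 / σ ^ 2 - 1 + Real.log ((s - t) / t)))) * s
          - 1) + 1) := by
  set A : ℝ := s / t + s ^ 2 / σ ^ 2 - 1 + Real.log ((s - t) / t) with hA
  set w : ℝ := W (Real.exp A) with hw
  have hz : (0:ℝ) < Real.exp A := Real.exp_pos A
  have hle : -(Real.exp 1)⁻¹ ≤ Real.exp A := by
    have : (0:ℝ) < (Real.exp 1)⁻¹ := by positivity
    linarith
  obtain ⟨hwe, _⟩ := hW (Real.exp A) hle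
  have hwpos : 0 < w := by
    by_contra h
    push_neg at h
    have : w * Real.exp w ≤ 0 :=
      mul_nonpos_of_nonpos_of_nonneg h (Real.exp_pos w).le
    rw [hwe] at this
    linarith
  have hst : 0 < s - t := by linarith
  have hfrac : (0:ℝ) < (s - t) / t := div_pos hst ht
  have hs' : s ≠ 0 := ne_of_gt hs
  have ht' : t ≠ 0 := ne_of_gt ht
  have hσ' : σ ≠ 0 := ne_of_gt hσ
  have hst' : s - t ≠ 0 := ne_of_gt hst
  -- key: exp(λ* s) = w * t / (s - t)
  have harg : (1 / t + s / σ ^ 2 - 1 / s - (1 / s) * w) * s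
      = A - Real.log ((s - t) / t) - w := by
    rw [hA]; field_simp; ring
  have hE : Real.exp ((1 / t + s / σ ^ 2 - 1 / s - (1 / s) * w) * s)
      = w * t / (s - t) := by
    rw [harg, Real.exp_sub, Real.exp_sub, Real.exp_log hfrac]
    rw [eq_div_iff hst']
    have hweq : Real.exp A = w * Real.exp w := by rw [← hwe]
    field_simp
    rw [hweq]; ring
  have harg2 : (1 / t + s / σ ^ 2 - 1 / s - (1 / s) * w) * s
      = s / t + s ^ 2 / σ ^ 2 - 1 - w := by
    rw [harg, hA]; ring
  rw [hE, harg2]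
  field_simp
  ring
end
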